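/- Let d ≥ 2 be an integer, n : ℕ, and p ∈ [0,1]. The infimum, over all PPT POVM elements E on the n-copy space, of Re(p · Tr(E · σ_d^{⊗n}) + (1−p) · Tr((1 − E) · α_d^{⊗n})) equals min(p · ((d−1)/(d+1))^n, 1−p), and this infimum is attained: by E = G_d^{⊗n} if p((d−1)/(d+1))^n ≤ 1−p, and by E = 0 otherwise. -/

import Mathlib

open Matrix Finset
open scoped BigOperators Kronecker ComplexOrder

noncomputable section

/-- The flip (swap) operator on `ℂ^d ⊗ ℂ^d`. -/
def Flip (d : ℕ) : Matrix (Fin d × Fin d) (Fin d × Fin d) ℂ :=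
  Matrix.of fun p q => if p.1 = q.2 ∧ p.2 = q.1 then 1 else 0

/-- Projection onto the symmetric subspace, `Π_s = (1 + F)/2`. -/
def projSym (d : ℕ) : Matrix (Fin d × Fin d) (Fin d × Fin d) ℂ :=
  (2 : ℂ)⁻¹ • (1 + Flip d)

/-- Projection onto the antisymmetric subspace, `Π_a = (1 - F)/2`. -/
def projAsym (d : ℕ) : Matrix (Fin d × Fin d) (Fin d × Fin d) ℂ :=
  (2 : ℂ)⁻¹ • (1 - Flip d)

/-- The symmetric Werner state `σ_d = (2/(d(d+1))) • Π_s`. -/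
def wernerSym (d : ℕ) : Matrix (Fin d × Fin d) (Fin d × Fin d) ℂ :=
  (2 / ((d : ℂ) * ((d : ℂ) + 1))) • projSym d

/-- The antisymmetric Werner state `α_d = (2/(d(d-1))) • Π_a`. -/
def wernerAsym (d : ℕ) : Matrix (Fin d × Fin d) (Fin d × Fin d) ℂ :=
  (2 / ((d : ℂ) * ((d : ℂ) - 1))) • projAsym d

/-- The POVM element `G_d`: diagonal, with `(i,j),(i,j)` entry `1` iff `i ≠ j`. -/
def Gmat (d : ℕ) : Matrix (Fin d × Fin d) (Fin d × Fin d) ℂ :=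
  Matrix.diagonal fun p => if p.1 ≠ p.2 then 1 else 0

/-- `n`-fold tensor power of a matrix on `ℂ^d ⊗ ℂ^d`. -/
def tpow {d : ℕ} (n : ℕ) (X : Matrix (Fin d × Fin d) (Fin d × Fin d) ℂ) :
    Matrix (Fin n → Fin d × Fin d) (Fin n → Fin d × Fin d) ℂ :=
  Matrix.of fun f g => ∏ m, X (f m) (g m)

/-- The twirled single-copy POVM element `M_d = ((d-1)/(d+1)) • Π_s + Π_a`. -/
def MdMat (d : ℕ) : Matrix (Fin d × Fin d) (Fin d × Fin d) ℂ :=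
  (((d : ℂ) - 1) / ((d : ℂ) + 1)) • projSym d + projAsym d

/-- `A_k`: sum over all `k`-element subsets `S` of the copies of the tensor product with
`Π_a` on copies in `S` and `Π_s` elsewhere. -/
def Amat (d n k : ℕ) : Matrix (Fin n → Fin d × Fin d) (Fin n → Fin d × Fin d) ℂ :=
  ∑ S ∈ Finset.powersetCard k (Finset.univ : Finset (Fin n)),
    Matrix.of fun f g => ∏ m, (if m ∈ S then projAsym d else projSym d) (f m) (g m)

/-- Partial transpose on `ℂ^d ⊗ ℂ^d`. -/
def pt {d : ℕ} (X : Matrix (Fin d × Fin d) (Fin d × Fin d) ℂ) :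
    Matrix (Fin d × Fin d) (Fin d × Fin d) ℂ :=
  Matrix.of fun p q => X (p.1, q.2) (q.1, p.2)

/-- The maximally entangled state `Φ_d`. -/
def Phi (d : ℕ) : Matrix (Fin d × Fin d) (Fin d × Fin d) ℂ :=
  Matrix.of fun p q => if p.1 = p.2 ∧ q.1 = q.2 then ((d : ℂ))⁻¹ else 0

/-- `n`-copy partial transpose. -/
def ptN {d n : ℕ} (Y : Matrix (Fin n → Fin d × Fin d) (Fin n → Fin d × Fin d) ℂ) :
    Matrix (Fin n → Fin d × Fin d) (Fin n → Fin d × Fin d) ℂ :=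
  Matrix.of fun f g => Y (fun m => ((f m).1, (g m).2)) (fun m => ((g m).1, (f m).2))

/-- `T_l`: sum over all `l`-element subsets `S` of the copies of the tensor product with
`Φ_d` on copies in `S` and `1 - Φ_d` elsewhere. -/
def Tmat (d n l : ℕ) : Matrix (Fin n → Fin d × Fin d) (Fin n → Fin d × Fin d) ℂ :=
  ∑ S ∈ Finset.powersetCard l (Finset.univ : Finset (Fin n)),
    Matrix.of fun f g => ∏ m, (if m ∈ S then Phi d else (1 - Phi d)) (f m) (g m)

/-- The matrix `Q` of the linear program: `Q l k = Σ_{j=0}^{min(l,k)}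
(n−l choose k−j)(l choose j)(1−d)^j (1+d)^{l−j}`. -/
def Qmat (n : ℕ) (d : ℝ) (l k : ℕ) : ℝ :=
  ∑ j ∈ Finset.range (min l k + 1),
    ((n - l).choose (k - j) : ℝ) * (l.choose j : ℝ) * (1 - d) ^ j * (1 + d) ^ (l - j)

/-- A PPT POVM element on the `n`-copy space: `E`, `1 - E`, `E^Γ`, `(1-E)^Γ` all PSD. -/
def IsPPTPovmElem {d n : ℕ}
    (E : Matrix (Fin n → Fin d × Fin d) (Fin n → Fin d × Fin d) ℂ) : Prop :=
  E.PosSemidef ∧ (1 - E).PosSemidef ∧ (ptN E).PosSemidef ∧ (ptN (1 - E)).PosSemidef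

/-- Error probability for discriminating `σ_d^{⊗n}` (prior `p`) from `α_d^{⊗n}`
(prior `1-p`) with the two-outcome POVM `{E, 1 - E}`. -/
def errProb (d n : ℕ) (p : ℝ)
    (E : Matrix (Fin n → Fin d × Fin d) (Fin n → Fin d × Fin d) ℂ) : ℝ :=
  ((p : ℂ) * (E * tpow n (wernerSym d)).trace
    + (1 - (p : ℂ)) * ((1 - E) * tpow n (wernerAsym d)).trace).re

/-- Separability of a bipartite matrix. -/
def IsSep {I J : Type*} [Fintype I] [Fintype J]
    (W : Matrix (I × J) (I × J) ℂ) : Prop :=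
  ∃ (m : ℕ) (A : Fin m → Matrix I I ℂ) (B : Fin m → Matrix J J ℂ),
    (∀ i, (A i).PosSemidef) ∧ (∀ i, (B i).PosSemidef) ∧ W = ∑ i, A i ⊗ₖ B i

/-- Trace norm `‖X‖₁ = Tr √(Xᴴ X)`. -/
def traceNorm {ι : Type*} [Fintype ι] [DecidableEq ι] (X : Matrix ι ι ℂ) : ℝ :=
  ((Matrix.posSemidef_conjTranspose_mul_self X).isHermitian.eigenvectorUnitary.1 *
    Matrix.diagonal (((↑) : ℝ → ℂ) ∘ Real.sqrt ∘
      (Matrix.posSemidef_conjTranspose_mul_self X).isHermitian.eigenvalues) *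
    (star (Matrix.posSemidef_conjTranspose_mul_self X).isHermitian.eigenvectorUnitary :
      Matrix ι ι ℂ)).trace.re

/-- Frobenius (Hilbert–Schmidt) norm `‖X‖₂ = √(Tr (Xᴴ X))`. -/
def frobNorm {ι : Type*} [Fintype ι] (X : Matrix ι ι ℂ) : ℝ :=
  Real.sqrt ((Xᴴ * X).trace.re)
set_option linter.unusedSectionVars false
set_option maxHeartbeats 1000000

section Aux
variable {κ : Type*} [Fintype κ] [DecidableEq κ]

open scoped MatrixOrder in
lemma psd_eq_ct_mul {ι : Type*} [Fintype ι] [DecidableEq ι] {M : Matrix ι ι ℂ}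
    (hM : M.PosSemidef) : ∃ Y : Matrix ι ι ℂ, M = Yᴴ * Y := by
  obtain ⟨B, hB⟩ := CStarAlgebra.nonneg_iff_eq_star_mul_self.mp hM.nonneg
  exact ⟨B, hB⟩

/-- general coordinatewise tensor product -/
def mtp {n : ℕ} (X : Fin n → Matrix κ κ ℂ) : Matrix (Fin n → κ) (Fin n → κ) ℂ :=
  Matrix.of fun f g => ∏ m, X m (f m) (g m)

lemma mtp_mul {n : ℕ} (X Y : Fin n → Matrix κ κ ℂ) :
    mtp X * mtp Y = mtp (fun m => X m * Y m) := by
  ext f g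
  simp only [mtp, Matrix.mul_apply, Matrix.of_apply, ← Finset.prod_mul_distrib]
  rw [Finset.prod_univ_sum, Fintype.piFinset_univ]

lemma mtp_trace {n : ℕ} (X : Fin n → Matrix κ κ ℂ) :
    (mtp X).trace = ∏ m, (X m).trace := by
  simp only [Matrix.trace, Matrix.diag, mtp, Matrix.of_apply]
  rw [Finset.prod_univ_sum, Fintype.piFinset_univ]

lemma mtp_conjTranspose {n : ℕ} (X : Fin n → Matrix κ κ ℂ) :
    (mtp X)ᴴ = mtp (fun m => (X m)ᴴ) := by
  ext f g
  simp [mtp, Matrix.conjTranspose_apply, map_prod]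

lemma mtp_posSemidef {n : ℕ} {X : Fin n → Matrix κ κ ℂ} (h : ∀ m, (X m).PosSemidef) :
    (mtp X).PosSemidef := by
  choose Y hY using fun m => psd_eq_ct_mul (h m)
  have : mtp X = (mtp Y)ᴴ * mtp Y := by
    rw [mtp_conjTranspose, mtp_mul]; congr 1; funext m; exact hY m
  rw [this]
  exact Matrix.posSemidef_conjTranspose_mul_self _

lemma psd_diag_nonneg {ι : Type*} [Fintype ι] [DecidableEq ι]
    {M : Matrix ι ι ℂ} (hM : M.PosSemidef) (i : ι) : 0 ≤ M i i := by
  exact hM.diag_nonneg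

lemma trace_psd_nonneg {ι : Type*} [Fintype ι] [DecidableEq ι]
    {M : Matrix ι ι ℂ} (hM : M.PosSemidef) : 0 ≤ M.trace :=
  Finset.sum_nonneg fun i _ => psd_diag_nonneg hM i

lemma trace_mul_psd_nonneg {ι : Type*} [Fintype ι] [DecidableEq ι]
    {A B : Matrix ι ι ℂ} (hA : A.PosSemidef) (hB : B.PosSemidef) :
    0 ≤ (A * B).trace := by
  obtain ⟨Y, rfl⟩ := psd_eq_ct_mul hB
  have h2 : (A * (Yᴴ * Y)).trace = (Y * A * Yᴴ).trace := by
    rw [← Matrix.mul_assoc, Matrix.trace_mul_cycle]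
  rw [h2]
  exact trace_psd_nonneg (hA.mul_mul_conjTranspose_same Y)

lemma psd_smul_real {ι : Type*} [Fintype ι] {M : Matrix ι ι ℂ} (hM : M.PosSemidef)
    {a : ℝ} (ha : 0 ≤ a) : ((a : ℂ) • M).PosSemidef := by
  refine Matrix.PosSemidef.of_dotProduct_mulVec_nonneg ?_ ?_
  · unfold Matrix.IsHermitian
    rw [Matrix.conjTranspose_smul, hM.1.eq]
    congr 1
    simp [Complex.ext_iff]
  · intro x
    rw [Matrix.smul_mulVec, dotProduct_smul]
    exact mul_nonneg (by exact_mod_cast Complex.zero_le_real.mpr ha) (hM.dotProduct_mulVec_nonneg x)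

lemma psd_of_idem {ι : Type*} [Fintype ι] {P : Matrix ι ι ℂ}
    (h1 : P.IsHermitian) (h2 : P * P = P) : P.PosSemidef := by
  have : P = Pᴴ * P := by rw [h1.eq, h2]
  rw [this]
  exact Matrix.posSemidef_conjTranspose_mul_self _

lemma psd_sum {ι β : Type*} [Fintype ι] (s : Finset β) (F : β → Matrix ι ι ℂ)
    (h : ∀ b ∈ s, (F b).PosSemidef) : (∑ b ∈ s, F b).PosSemidef := by
  classical
  induction s using Finset.induction_on with
  | empty => simpa using Matrix.PosSemidef.zero
  | insert b s hb ih =>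
    rw [Finset.sum_insert hb]
    exact ((h _ (Finset.mem_insert_self _ _)).add
      (ih fun b hbs => h b (Finset.mem_insert_of_mem hbs)))

end Aux

section SingleCopy
variable {d : ℕ}

lemma flip_mul_flip : Flip d * Flip d = 1 := by
  ext p q
  simp only [Flip, Matrix.mul_apply, Matrix.of_apply, Matrix.one_apply, Fintype.sum_prod_type,
    ite_and]
  simp [Finset.sum_ite_eq, Finset.sum_ite_eq', Prod.ext_iff, eq_comm, and_comm, ite_and]

lemma flip_herm : (Flip d).IsHermitian := by
  ext p q
  simp only [Flip, Matrix.conjTranspose_apply, Matrix.of_apply]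
  by_cases h : p.1 = q.2 ∧ p.2 = q.1
  · rw [if_pos ⟨h.2.symm, h.1.symm⟩, if_pos h]; simp
  · rw [if_neg, if_neg h]
    · simp
    · rintro ⟨a, b⟩; exact h ⟨b.symm, a.symm⟩

lemma phi_herm : (Phi d).IsHermitian := by
  ext p q
  simp only [Phi, Matrix.conjTranspose_apply, Matrix.of_apply, and_comm]
  split <;> simp [Complex.ext_iff]

lemma phi_mul_phi (hd : 0 < d) : Phi d * Phi d = Phi d := by
  ext p q
  simp only [Phi, Matrix.mul_apply, Matrix.of_apply, Fintype.sum_prod_type, ite_and]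
  by_cases hp : p.1 = p.2 <;> by_cases hq : q.1 = q.2 <;>
    simp [hp, hq, Finset.sum_ite_eq, Finset.mul_sum]
  rw [mul_comm]
  have : (d:ℂ) ≠ 0 := Nat.cast_ne_zero.mpr hd.ne'
  field_simp

lemma phi_psd (hd : 0 < d) : (Phi d).PosSemidef := psd_of_idem phi_herm (phi_mul_phi hd)

lemma projSym_herm : (projSym d).IsHermitian := by
  unfold projSym
  unfold Matrix.IsHermitian
  rw [Matrix.conjTranspose_smul, Matrix.conjTranspose_add, Matrix.conjTranspose_one, flip_herm.eq]
  congr 1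
  simp [Complex.ext_iff]

lemma projAsym_herm : (projAsym d).IsHermitian := by
  unfold projAsym
  unfold Matrix.IsHermitian
  rw [Matrix.conjTranspose_smul, Matrix.conjTranspose_sub, Matrix.conjTranspose_one, flip_herm.eq]
  congr 1
  simp [Complex.ext_iff]

lemma projSym_idem : projSym d * projSym d = projSym d := by
  unfold projSym
  rw [Matrix.smul_mul, Matrix.mul_smul, smul_smul]
  rw [add_mul, mul_add, mul_add, flip_mul_flip]
  rw [one_mul, one_mul, mul_one]
  ext p q
  simp only [Matrix.smul_apply, Matrix.add_apply, smul_eq_mul]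
  ring

lemma projAsym_idem : projAsym d * projAsym d = projAsym d := by
  unfold projAsym
  rw [Matrix.smul_mul, Matrix.mul_smul, smul_smul]
  rw [sub_mul, mul_sub, mul_sub, flip_mul_flip]
  rw [one_mul, one_mul, mul_one]
  ext p q
  simp only [Matrix.smul_apply, Matrix.sub_apply, Matrix.add_apply, smul_eq_mul]
  ring

lemma projSym_psd : (projSym d).PosSemidef := psd_of_idem projSym_herm projSym_idem
lemma projAsym_psd : (projAsym d).PosSemidef := psd_of_idem projAsym_herm projAsym_idem

lemma wernerSym_psd : (wernerSym d).PosSemidef := by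
  have : wernerSym d = ((2 / ((d:ℝ) * ((d:ℝ) + 1)) : ℝ) : ℂ) • projSym d := by
    unfold wernerSym; push_cast; ring_nf
  rw [this]
  exact psd_smul_real projSym_psd (by positivity)

lemma wernerAsym_psd (hd : 2 ≤ d) : (wernerAsym d).PosSemidef := by
  have : wernerAsym d = ((2 / ((d:ℝ) * ((d:ℝ) - 1)) : ℝ) : ℂ) • projAsym d := by
    unfold wernerAsym; push_cast; ring_nf
  rw [this]
  have h1 : (1:ℝ) ≤ (d:ℝ) := by exact_mod_cast Nat.one_le_of_lt hd
  exact psd_smul_real projAsym_psd (by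
    apply div_nonneg (by norm_num)
    nlinarith)

end SingleCopy
section PT
variable {d n : ℕ}

lemma pt_one : pt (1 : Matrix (Fin d × Fin d) (Fin d × Fin d) ℂ) = 1 := by
  ext p q
  simp only [pt, Matrix.of_apply, Matrix.one_apply, Prod.ext_iff, Prod.mk.injEq]
  by_cases h1 : p.1 = q.1 <;> by_cases h2 : p.2 = q.2 <;> simp [h1, h2, eq_comm]

lemma pt_flip : pt (Flip d) = (d : ℂ) • Phi d := by
  ext p q
  simp only [pt, Flip, Phi, Matrix.of_apply, Matrix.smul_apply, smul_eq_mul]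
  by_cases h1 : p.1 = p.2 <;> by_cases h2 : q.1 = q.2 <;>
    simp [h1, h2, eq_comm]
  all_goals try tauto
  rcases Nat.eq_zero_or_pos d with h | h
  · subst h; exact p.1.elim0
  · field_simp

lemma pt_add (A B : Matrix (Fin d × Fin d) (Fin d × Fin d) ℂ) : pt (A + B) = pt A + pt B := rfl
lemma pt_sub (A B : Matrix (Fin d × Fin d) (Fin d × Fin d) ℂ) : pt (A - B) = pt A - pt B := rfl
lemma pt_smul (c : ℂ) (A : Matrix (Fin d × Fin d) (Fin d × Fin d) ℂ) : pt (c • A) = c • pt A := rfl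

lemma pt_projSym : pt (projSym d) = (2 : ℂ)⁻¹ • (1 + (d : ℂ) • Phi d) := by
  unfold projSym
  rw [pt_smul, pt_add, pt_one, pt_flip]

lemma pt_projAsym : pt (projAsym d) = (2 : ℂ)⁻¹ • (1 - (d : ℂ) • Phi d) := by
  unfold projAsym
  rw [pt_smul, pt_sub, pt_one, pt_flip]

lemma pt_gmat : pt (Gmat d) = Gmat d := by
  ext p q
  simp only [pt, Gmat, Matrix.of_apply, Matrix.diagonal_apply, Prod.ext_iff, Prod.mk.injEq]
  by_cases h1 : p.1 = q.1 <;> by_cases h2 : p.2 = q.2 <;>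
    simp [h1, h2, eq_comm]
  all_goals try tauto
  all_goals intro h; subst h1 h2; tauto

lemma tpow_eq_mtp (X : Matrix (Fin d × Fin d) (Fin d × Fin d) ℂ) :
    tpow n X = mtp (fun _ => X) := rfl

lemma tpow_smul (c : ℂ) (X : Matrix (Fin d × Fin d) (Fin d × Fin d) ℂ) :
    tpow n (c • X) = c ^ n • tpow n X := by
  ext f g
  simp [tpow, Finset.prod_mul_distrib, mul_comm]

lemma tpow_psd {X : Matrix (Fin d × Fin d) (Fin d × Fin d) ℂ} (h : X.PosSemidef) :
    (tpow n X : Matrix (Fin n → Fin d × Fin d) _ ℂ).PosSemidef := by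
  rw [tpow_eq_mtp]; exact mtp_posSemidef fun _ => h

lemma ptN_tpow (X : Matrix (Fin d × Fin d) (Fin d × Fin d) ℂ) :
    ptN (tpow n X) = tpow n (pt X) := rfl

lemma ptN_sub (A B : Matrix (Fin n → Fin d × Fin d) (Fin n → Fin d × Fin d) ℂ) :
    ptN (A - B) = ptN A - ptN B := rfl

lemma ptN_one : ptN (1 : Matrix (Fin n → Fin d × Fin d) (Fin n → Fin d × Fin d) ℂ) = 1 := by
  ext f g
  simp only [ptN, Matrix.of_apply, Matrix.one_apply]
  by_cases h : f = g
  · subst h; simp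
  · rw [if_neg, if_neg h]
    intro hc
    apply h
    funext m
    have h1 := congrFun hc m
    simp only [Prod.mk.injEq] at h1
    exact Prod.ext h1.1 h1.2.symm

lemma ptN_smul (c : ℂ) (A : Matrix (Fin n → Fin d × Fin d) (Fin n → Fin d × Fin d) ℂ) :
    ptN (c • A) = c • ptN A := rfl

/-- key pairing: Tr(ptN A * ptN B) = Tr(A * B) -/
lemma trace_ptN_mul_ptN (A B : Matrix (Fin n → Fin d × Fin d) (Fin n → Fin d × Fin d) ℂ) :
    (ptN A * ptN B).trace = (A * B).trace := by
  have expand : ∀ C D : Matrix (Fin n → Fin d × Fin d) (Fin n → Fin d × Fin d) ℂ,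
      (C * D).trace = ∑ p : (Fin n → Fin d × Fin d) × (Fin n → Fin d × Fin d),
        C p.1 p.2 * D p.2 p.1 := by
    intro C D
    rw [Fintype.sum_prod_type]
    simp [Matrix.trace, Matrix.diag, Matrix.mul_apply]
  rw [expand, expand]
  set e : ((Fin n → Fin d × Fin d) × (Fin n → Fin d × Fin d)) →
      ((Fin n → Fin d × Fin d) × (Fin n → Fin d × Fin d)) :=
    fun p => (fun m => ((p.1 m).1, (p.2 m).2), fun m => ((p.2 m).1, (p.1 m).2)) with he
  have hinv : Function.Involutive e := by
    intro p; simp [he]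
  exact Fintype.sum_bijective e hinv.bijective _ _ (fun p => rfl)

end PT
section Traces
variable {d n : ℕ}

lemma dC_ne (hd : 2 ≤ d) : ((d:ℂ) ≠ 0) ∧ ((d:ℂ) + 1 ≠ 0) ∧ ((d:ℂ) - 1 ≠ 0) := by
  refine ⟨Nat.cast_ne_zero.mpr (by omega), ?_, ?_⟩
  · intro h
    have : ((d + 1 : ℕ) : ℂ) = 0 := by push_cast; linear_combination h
    exact absurd (Nat.cast_eq_zero.mp this) (by omega)
  · intro h
    have : ((d : ℕ) : ℂ) = ((1 : ℕ) : ℂ) := by push_cast; linear_combination h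
    have := Nat.cast_injective this
    omega

lemma trace_flip : (Flip d).trace = (d : ℂ) := by
  simp only [Matrix.trace, Matrix.diag, Flip, Matrix.of_apply, Fintype.sum_prod_type]
  simp [Finset.sum_ite_eq, and_self, eq_comm]

lemma trace_wernerSym (hd : 2 ≤ d) : (wernerSym d).trace = 1 := by
  obtain ⟨h0, h1, h2⟩ := dC_ne hd
  unfold wernerSym projSym
  rw [Matrix.trace_smul, Matrix.trace_smul, Matrix.trace_add, Matrix.trace_one, trace_flip]
  simp only [Finset.card_univ, Fintype.card_prod, Fintype.card_fin, smul_eq_mul]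
  field_simp
  push_cast
  ring

lemma trace_wernerAsym (hd : 2 ≤ d) : (wernerAsym d).trace = 1 := by
  obtain ⟨h0, h1, h2⟩ := dC_ne hd
  unfold wernerAsym projAsym
  rw [Matrix.trace_smul, Matrix.trace_smul, Matrix.trace_sub, Matrix.trace_one, trace_flip]
  simp only [Finset.card_univ, Fintype.card_prod, Fintype.card_fin, smul_eq_mul]
  field_simp
  push_cast
  ring

lemma sum_diag_ite (c : ℂ) :
    ∑ p : Fin d × Fin d, (if p.1 = p.2 then c else 0) = (d:ℂ) * c := by
  rw [Fintype.sum_prod_type]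
  simp [Finset.sum_ite_eq, mul_comm]

/-- trace of G times M : `∑_p (1 - [p1=p2]) M p p` -/
lemma trace_gmat_mul (M : Matrix (Fin d × Fin d) (Fin d × Fin d) ℂ) :
    (Gmat d * M).trace = M.trace - ∑ p : Fin d × Fin d, (if p.1 = p.2 then M p p else 0) := by
  unfold Gmat
  simp only [Matrix.trace, Matrix.diag, Matrix.mul_apply, Matrix.diagonal_apply, ite_mul, zero_mul,
    Finset.sum_ite_eq, Finset.mem_univ, if_true]
  rw [← Finset.sum_sub_distrib]
  congr 1
  funext p
  by_cases h : p.1 = p.2 <;> simp [h]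

lemma trace_gmat_wernerSym (hd : 2 ≤ d) :
    (Gmat d * wernerSym d).trace = ((d:ℂ) - 1) / ((d:ℂ) + 1) := by
  obtain ⟨h0, h1, h2⟩ := dC_ne hd
  rw [trace_gmat_mul, trace_wernerSym hd]
  have hdiag : ∀ p : Fin d × Fin d, p.1 = p.2 →
      wernerSym d p p = 2 / ((d:ℂ) * ((d:ℂ) + 1)) := by
    intro p hp
    simp only [wernerSym, projSym, Flip, Matrix.smul_apply, Matrix.add_apply, Matrix.one_apply,
      Matrix.of_apply, if_pos rfl, hp, and_self, if_true, smul_eq_mul]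
    field_simp; norm_num
  have hstep : ∀ p : Fin d × Fin d, (if p.1 = p.2 then wernerSym d p p else 0)
      = (if p.1 = p.2 then 2 / ((d:ℂ) * ((d:ℂ) + 1)) else 0) := by
    intro p
    by_cases h : p.1 = p.2
    · rw [if_pos h, if_pos h, hdiag p h]
    · rw [if_neg h, if_neg h]
  rw [Finset.sum_congr rfl (fun p _ => hstep p), sum_diag_ite]
  field_simp
  ring

lemma trace_gmat_wernerAsym (hd : 2 ≤ d) :
    (Gmat d * wernerAsym d).trace = 1 := by
  obtain ⟨h0, h1, h2⟩ := dC_ne hd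
  rw [trace_gmat_mul, trace_wernerAsym hd]
  have hdiag : ∀ p : Fin d × Fin d, p.1 = p.2 → wernerAsym d p p = 0 := by
    intro p hp
    simp only [wernerAsym, projAsym, Flip, Matrix.smul_apply, Matrix.sub_apply, Matrix.one_apply,
      Matrix.of_apply, if_pos rfl, hp, and_self, if_true, smul_eq_mul]
    ring
  have hsum : ∑ p : Fin d × Fin d, (if p.1 = p.2 then wernerAsym d p p else 0) = 0 := by
    apply Finset.sum_eq_zero
    intro p _
    by_cases h : p.1 = p.2
    · rw [if_pos h, hdiag p h]
    · rw [if_neg h]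
  rw [hsum, sub_zero]

end Traces
section Delta
variable {d n : ℕ}

lemma tpow_one_add_smul (c : ℂ) :
    tpow n ((1 : Matrix (Fin d × Fin d) (Fin d × Fin d) ℂ) + c • Phi d)
      = ∑ S ∈ Finset.powerset (Finset.univ : Finset (Fin n)),
        c ^ S.card • mtp (fun m => if m ∈ S then Phi d else 1) := by
  ext f g
  simp only [tpow, Matrix.of_apply, Matrix.add_apply, Matrix.smul_apply, smul_eq_mul,
    Matrix.sum_apply]
  have hsw : ∀ m : Fin n, ((1 : Matrix (Fin d × Fin d) (Fin d × Fin d) ℂ) (f m) (g m)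
        + c * Phi d (f m) (g m))
      = (fun m => c * Phi d (f m) (g m)) m
        + (fun m => (1 : Matrix (Fin d × Fin d) (Fin d × Fin d) ℂ) (f m) (g m)) m := by
    intro m; ring
  rw [Finset.prod_congr rfl (fun m _ => hsw m), Finset.prod_add]
  apply Finset.sum_congr rfl
  intro S _
  rw [Finset.prod_mul_distrib, Finset.prod_const]
  simp only [mtp, Matrix.of_apply, smul_eq_mul]
  rw [mul_assoc]
  congr 1
  rw [← Finset.prod_mul_prod_compl S
    (fun m => (if m ∈ S then Phi d else 1) (f m) (g m)), Finset.compl_eq_univ_sdiff]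
  congr 1
  · exact Finset.prod_congr rfl (fun m hm => by rw [if_pos hm])
  · exact Finset.prod_congr rfl (fun m hm => by rw [if_neg (Finset.mem_sdiff.mp hm).2])

lemma delta_psd (hd : 2 ≤ d) :
    (tpow n ((1 : Matrix (Fin d × Fin d) (Fin d × Fin d) ℂ) + (d:ℂ) • Phi d)
      - tpow n (1 + (-(d:ℂ)) • Phi d)).PosSemidef := by
  rw [tpow_one_add_smul, tpow_one_add_smul, ← Finset.sum_sub_distrib]
  apply psd_sum
  intro S _
  rw [← sub_smul]
  have hco : ((d:ℂ) ^ S.card - (-(d:ℂ)) ^ S.card)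
      = ((((d:ℝ) ^ S.card - (-(d:ℝ)) ^ S.card) : ℝ) : ℂ) := by push_cast; ring
  rw [hco]
  apply psd_smul_real
  · apply mtp_posSemidef
    intro m
    by_cases h : m ∈ S
    · rw [if_pos h]; exact phi_psd (by omega)
    · rw [if_neg h]; exact Matrix.PosSemidef.one
  · rcases Nat.even_or_odd S.card with he | ho
    · rw [he.neg_pow]; simp
    · rw [ho.neg_pow]
      have : (0:ℝ) ≤ (d:ℝ) ^ S.card := by positivity
      linarith

lemma ptN_key_psd (hd : 2 ≤ d) :
    (ptN (tpow n (wernerSym d)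
      - ((((d:ℝ) - 1) / ((d:ℝ) + 1) : ℝ) : ℂ) ^ n • tpow n (wernerAsym d))).PosSemidef := by
  obtain ⟨h0, h1, h2⟩ := dC_ne (d := d) hd
  have hσ : pt (wernerSym d) = (1 / ((d:ℂ) * ((d:ℂ) + 1))) • (1 + (d:ℂ) • Phi d) := by
    unfold wernerSym
    rw [pt_smul, pt_projSym, smul_smul]
    congr 1
    field_simp
  have hα : pt (wernerAsym d) = (1 / ((d:ℂ) * ((d:ℂ) - 1))) • (1 + (-(d:ℂ)) • Phi d) := by
    unfold wernerAsym
    rw [pt_smul, pt_projAsym, smul_smul]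
    rw [show (1 : Matrix (Fin d × Fin d) (Fin d × Fin d) ℂ) - (d:ℂ) • Phi d
      = 1 + (-(d:ℂ)) • Phi d by rw [neg_smul, sub_eq_add_neg]]
    congr 1
    field_simp
  rw [ptN_sub, ptN_smul, ptN_tpow, ptN_tpow, hσ, hα, tpow_smul, tpow_smul, smul_smul]
  have hr : ((((d:ℝ) - 1) / ((d:ℝ) + 1) : ℝ) : ℂ) = ((d:ℂ) - 1) / ((d:ℂ) + 1) := by push_cast; ring
  have hsc : ((((d:ℝ) - 1) / ((d:ℝ) + 1) : ℝ) : ℂ) ^ n * (1 / ((d:ℂ) * ((d:ℂ) - 1))) ^ n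
      = (1 / ((d:ℂ) * ((d:ℂ) + 1))) ^ n := by
    rw [hr, ← mul_pow]
    congr 1
    field_simp
  rw [hsc, ← smul_sub]
  have hcast : (1 / ((d:ℂ) * ((d:ℂ) + 1))) ^ n
      = (((1 / ((d:ℝ) * ((d:ℝ) + 1))) ^ n : ℝ) : ℂ) := by push_cast; ring
  rw [hcast]
  exact psd_smul_real (delta_psd hd) (by positivity)

end Delta
section Main
variable {d n : ℕ}

lemma trace_tpow_wernerAsym (hd : 2 ≤ d) : (tpow n (wernerAsym d)).trace = 1 := by
  rw [tpow_eq_mtp, mtp_trace]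
  simp [trace_wernerAsym hd]

lemma tpow_gmat_diag : tpow n (Gmat d)
    = Matrix.diagonal (fun f : Fin n → Fin d × Fin d =>
        ∏ m, (if (f m).1 ≠ (f m).2 then (1:ℂ) else 0)) := by
  ext f g
  by_cases h : f = g
  · subst h
    simp [tpow, Gmat, Matrix.diagonal_apply_eq]
  · obtain ⟨m0, hm0⟩ : ∃ m, f m ≠ g m := by
      by_contra hc; push_neg at hc; exact h (funext hc)
    rw [Matrix.diagonal_apply_ne _ h]
    show (∏ m, Gmat d (f m) (g m)) = 0
    exact Finset.prod_eq_zero (Finset.mem_univ m0)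
      (by simp [Gmat, Matrix.diagonal_apply_ne _ hm0])

lemma gmat_tpow_ppt : IsPPTPovmElem (tpow n (Gmat d)) := by
  have h1 : (tpow n (Gmat d)).PosSemidef := by
    apply tpow_psd
    refine Matrix.posSemidef_diagonal_iff.mpr fun p => ?_
    split <;> simp
  have h2 : ((1 : Matrix (Fin n → Fin d × Fin d) (Fin n → Fin d × Fin d) ℂ)
      - tpow n (Gmat d)).PosSemidef := by
    rw [tpow_gmat_diag, ← Matrix.diagonal_one, Matrix.diagonal_sub]
    refine Matrix.posSemidef_diagonal_iff.mpr fun f => ?_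
    simp only [Pi.sub_apply, Pi.one_apply, Fintype.prod_boole]
    split <;> norm_num
  have h3 : ptN (tpow n (Gmat d)) = tpow n (Gmat d) := by rw [ptN_tpow, pt_gmat]
  exact ⟨h1, h2, h3 ▸ h1, by rw [ptN_sub, ptN_one, h3]; exact h2⟩

lemma zero_ppt : IsPPTPovmElem (0 : Matrix (Fin n → Fin d × Fin d) (Fin n → Fin d × Fin d) ℂ) := by
  have h0 : ptN (0 : Matrix (Fin n → Fin d × Fin d) (Fin n → Fin d × Fin d) ℂ) = 0 := rfl
  refine ⟨Matrix.PosSemidef.zero, ?_, ?_, ?_⟩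
  · rw [sub_zero]; exact Matrix.PosSemidef.one
  · rw [h0]; exact Matrix.PosSemidef.zero
  · rw [sub_zero, ptN_one]; exact Matrix.PosSemidef.one

lemma errProb_gmat (hd : 2 ≤ d) (p : ℝ) :
    errProb d n p (tpow n (Gmat d)) = p * (((d:ℝ) - 1) / ((d:ℝ) + 1)) ^ n := by
  unfold errProb
  have e1 : (tpow n (Gmat d) * tpow n (wernerSym d)).trace
      = (((d:ℂ) - 1) / ((d:ℂ) + 1)) ^ n := by
    rw [tpow_eq_mtp, tpow_eq_mtp, mtp_mul, mtp_trace]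
    simp [trace_gmat_wernerSym hd, div_pow]
  have e2 : ((1 - tpow n (Gmat d)) * tpow n (wernerAsym d)).trace = 0 := by
    rw [sub_mul, one_mul, Matrix.trace_sub, trace_tpow_wernerAsym hd]
    rw [tpow_eq_mtp (X := Gmat d), tpow_eq_mtp, mtp_mul, mtp_trace]
    simp [trace_gmat_wernerAsym hd]
  rw [e1, e2, mul_zero, add_zero]
  have : (((d:ℂ) - 1) / ((d:ℂ) + 1)) ^ n
      = ((((((d:ℝ) - 1) / ((d:ℝ) + 1)) ^ n : ℝ)) : ℂ) := by push_cast; ring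
  rw [this, ← Complex.ofReal_mul]
  exact Complex.ofReal_re _

lemma errProb_zero (hd : 2 ≤ d) (p : ℝ) :
    errProb d n p (0 : Matrix (Fin n → Fin d × Fin d) (Fin n → Fin d × Fin d) ℂ) = 1 - p := by
  unfold errProb
  rw [Matrix.zero_mul, Matrix.trace_zero, mul_zero, zero_add, sub_zero, one_mul,
    trace_tpow_wernerAsym hd, mul_one]
  simp

lemma errProb_lower (hd : 2 ≤ d) {p : ℝ} (hp0 : 0 ≤ p) (hp1 : p ≤ 1)
    {E : Matrix (Fin n → Fin d × Fin d) (Fin n → Fin d × Fin d) ℂ} (hE : IsPPTPovmElem E) :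
    min (p * (((d:ℝ) - 1) / ((d:ℝ) + 1)) ^ n) (1 - p) ≤ errProb d n p E := by
  obtain ⟨hE1, hE2, hE3, hE4⟩ := hE
  have hd2 : (2:ℝ) ≤ (d:ℝ) := by exact_mod_cast hd
  set r : ℝ := ((d:ℝ) - 1) / ((d:ℝ) + 1) with hrdef
  have hr0 : 0 ≤ r := by apply div_nonneg <;> linarith
  have hrn0 : 0 ≤ r ^ n := pow_nonneg hr0 n
  have hσn : (tpow n (wernerSym d)).PosSemidef := tpow_psd wernerSym_psd
  have hαn : (tpow n (wernerAsym d)).PosSemidef := tpow_psd (wernerAsym_psd hd)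
  have hαtr : (tpow n (wernerAsym d)).trace = 1 := trace_tpow_wernerAsym hd
  have hs := trace_mul_psd_nonneg hE1 hσn
  have ht := trace_mul_psd_nonneg hE1 hαn
  obtain ⟨hsre, hsim⟩ := Complex.nonneg_iff.mp hs
  obtain ⟨htre, htim⟩ := Complex.nonneg_iff.mp ht
  have hsC : (E * tpow n (wernerSym d)).trace
      = (((E * tpow n (wernerSym d)).trace.re : ℝ) : ℂ) := Complex.ext rfl (by simp [← hsim])
  have htC : (E * tpow n (wernerAsym d)).trace
      = (((E * tpow n (wernerAsym d)).trace.re : ℝ) : ℂ) := Complex.ext rfl (by simp [← htim])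
  set s : ℝ := (E * tpow n (wernerSym d)).trace.re
  set t : ℝ := (E * tpow n (wernerAsym d)).trace.re
  have ht1 : t ≤ 1 := by
    have h := trace_mul_psd_nonneg hE2 hαn
    rw [sub_mul, one_mul, Matrix.trace_sub, hαtr, htC] at h
    have := sub_nonneg.mp h
    exact_mod_cast this
  have hkeyR : r ^ n * t ≤ s := by
    have h := trace_mul_psd_nonneg hE3 (ptN_key_psd (n := n) hd)
    rw [trace_ptN_mul_ptN, mul_sub, Matrix.mul_smul, Matrix.trace_sub, Matrix.trace_smul,
      smul_eq_mul] at h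
    have h2 := sub_nonneg.mp h
    rw [hsC, htC, ← Complex.ofReal_pow, ← Complex.ofReal_mul] at h2
    exact Complex.real_le_real.mp h2
  have hexp : ((1 - E) * tpow n (wernerAsym d)).trace
      = 1 - (E * tpow n (wernerAsym d)).trace := by
    rw [sub_mul, one_mul, Matrix.trace_sub, hαtr]
  have herr : errProb d n p E = p * s + (1 - p) * (1 - t) := by
    unfold errProb
    rw [hexp, hsC, htC]
    simp only [Complex.add_re, Complex.mul_re, Complex.sub_re, Complex.sub_im, Complex.one_re,
      Complex.one_im, Complex.ofReal_re, Complex.ofReal_im]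
    ring
  rw [herr]
  rcases le_total (p * r ^ n) (1 - p) with hc | hc
  · rw [min_eq_left hc]
    nlinarith [mul_le_mul_of_nonneg_left hkeyR hp0,
      mul_le_mul_of_nonneg_right hc (by linarith : (0:ℝ) ≤ 1 - t)]
  · rw [min_eq_right hc]
    nlinarith [mul_le_mul_of_nonneg_left hkeyR hp0,
      mul_le_mul_of_nonneg_right hc htre]

end Main
/-- the optimal PPT error is `min(p((d−1)/(d+1))^n, 1−p)`, attained by
`G_d^{⊗n}` when `p((d−1)/(d+1))^n ≤ 1−p` and by `E = 0` otherwise. -/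
theorem ppt_optimal_error (d : ℕ) (hd : 2 ≤ d) (n : ℕ) (p : ℝ)
    (hp0 : 0 ≤ p) (hp1 : p ≤ 1) :
    IsLeast { x : ℝ |
        ∃ E : Matrix (Fin n → Fin d × Fin d) (Fin n → Fin d × Fin d) ℂ,
          IsPPTPovmElem E ∧ x = errProb d n p E }
      (min (p * (((d : ℝ) - 1) / ((d : ℝ) + 1)) ^ n) (1 - p)) ∧
    (p * (((d : ℝ) - 1) / ((d : ℝ) + 1)) ^ n ≤ 1 - p →
      IsPPTPovmElem (tpow n (Gmat d)) ∧
      errProb d n p (tpow n (Gmat d))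
        = min (p * (((d : ℝ) - 1) / ((d : ℝ) + 1)) ^ n) (1 - p)) ∧
    (¬ p * (((d : ℝ) - 1) / ((d : ℝ) + 1)) ^ n ≤ 1 - p →
      IsPPTPovmElem (0 : Matrix (Fin n → Fin d × Fin d) (Fin n → Fin d × Fin d) ℂ) ∧
      errProb d n p (0 : Matrix (Fin n → Fin d × Fin d) (Fin n → Fin d × Fin d) ℂ)
        = min (p * (((d : ℝ) - 1) / ((d : ℝ) + 1)) ^ n) (1 - p)) := by
  refine ⟨⟨?_, ?_⟩, ?_, ?_⟩
  · rcases le_or_gt (p * (((d : ℝ) - 1) / ((d : ℝ) + 1)) ^ n) (1 - p) with hc | hc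
    · exact ⟨tpow n (Gmat d), gmat_tpow_ppt, by rw [errProb_gmat hd, min_eq_left hc]⟩
    · exact ⟨0, zero_ppt, by rw [errProb_zero hd, min_eq_right hc.le]⟩
  · rintro x ⟨E, hE, rfl⟩
    exact errProb_lower hd hp0 hp1 hE
  · intro hc
    exact ⟨gmat_tpow_ppt, by rw [errProb_gmat hd, min_eq_left hc]⟩
  · intro hc
    push_neg at hc
    exact ⟨zero_ppt, by rw [errProb_zero hd, min_eq_right hc.le]⟩

end
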